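/- Let C be a 3×3 unitary matrix with entries a^{(i,j)}, e^{iΔ} = det C, and λ ∈ ℝ with e^{iλ} ≠ a^{(2,2)}. Then A(λ)D(λ) − B(λ)C(λ) = −e^{i(λ+Δ)} · (e^{−iλ} − conj(a^{(2,2)}))/(e^{iλ} − a^{(2,2)}). -/

import Mathlib

open Complex Matrix ComplexConjugate

noncomputable section

/-- `A(λ)` for a 3×3 coin matrix `M`. -/
def coefA (M : Matrix (Fin 3) (Fin 3) ℂ) (lam : ℝ) : ℂ :=
  M 0 0 + M 0 1 * M 1 0 / (Complex.exp (lam * Complex.I) - M 1 1)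

/-- `B(λ)` for a 3×3 coin matrix `M`. -/
def coefB (M : Matrix (Fin 3) (Fin 3) ℂ) (lam : ℝ) : ℂ :=
  M 0 2 + M 0 1 * M 1 2 / (Complex.exp (lam * Complex.I) - M 1 1)

/-- `C(λ)` for a 3×3 coin matrix `M`. -/
def coefC (M : Matrix (Fin 3) (Fin 3) ℂ) (lam : ℝ) : ℂ :=
  M 2 0 + M 2 1 * M 1 0 / (Complex.exp (lam * Complex.I) - M 1 1)

/-- `D(λ)` for a 3×3 coin matrix `M`. -/
def coefD (M : Matrix (Fin 3) (Fin 3) ℂ) (lam : ℝ) : ℂ :=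
  M 2 2 + M 2 1 * M 1 2 / (Complex.exp (lam * Complex.I) - M 1 1)

/-- `A(λ)D(λ) − B(λ)C(λ) = −e^{i(λ+Δ)} (e^{−iλ} − conj a^{(2,2)})/(e^{iλ} − a^{(2,2)})`
for a 3×3 unitary coin `M`, where `e^{iΔ} = det M`. -/
theorem coefAD_sub_coefBC (M : Matrix (Fin 3) (Fin 3) ℂ)
    (hM : M ∈ Matrix.unitaryGroup (Fin 3) ℂ) (lam : ℝ)
    (hne : Complex.exp (lam * Complex.I) ≠ M 1 1) :
    coefA M lam * coefD M lam - coefB M lam * coefC M lam =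
      -(Complex.exp (lam * Complex.I) * M.det) *
        ((Complex.exp (-(lam * Complex.I)) - conj (M 1 1)) /
          (Complex.exp (lam * Complex.I) - M 1 1)) := by
  have h1 : star M * M = 1 := hM.1
  have hadj : M.adjugate = M.det • star M := by
    calc M.adjugate = (star M * M) * M.adjugate := by rw [h1, one_mul]
      _ = star M * (M.det • (1 : Matrix (Fin 3) (Fin 3) ℂ)) := by
          rw [mul_assoc, Matrix.mul_adjugate]
      _ = M.det • star M := by rw [Matrix.mul_smul, mul_one]
  have key : M 0 0 * M 2 2 - M 0 2 * M 2 0 = M.det * conj (M 1 1) := by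
    have := congrFun (congrFun hadj 1) 1
    rw [Matrix.adjugate_fin_three] at this
    simpa [Matrix.smul_apply, Matrix.star_apply, RCLike.star_def] using this
  have hdet : M.det = M 0 0 * M 1 1 * M 2 2 - M 0 0 * M 1 2 * M 2 1
      - M 0 1 * M 1 0 * M 2 2 + M 0 1 * M 1 2 * M 2 0
      + M 0 2 * M 1 0 * M 2 1 - M 0 2 * M 1 1 * M 2 0 := by
    rw [Matrix.det_fin_three]
  have he : Complex.exp (lam * Complex.I) - M 1 1 ≠ 0 := sub_ne_zero.mpr hne
  have he0 : Complex.exp (lam * Complex.I) ≠ 0 := Complex.exp_ne_zero _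
  have hneg : Complex.exp (-(lam * Complex.I)) = (Complex.exp (lam * Complex.I))⁻¹ :=
    Complex.exp_neg _
  have hAD : coefA M lam * coefD M lam - coefB M lam * coefC M lam
      = (M 0 0 * M 2 2 - M 0 2 * M 2 0)
        + (M 1 1 * (M 0 0 * M 2 2 - M 0 2 * M 2 0) - M.det)
          / (Complex.exp (lam * Complex.I) - M 1 1) := by
    unfold coefA coefB coefC coefD
    field_simp
    linear_combination (Complex.exp (lam * Complex.I) - M 1 1) * hdet
  rw [hAD, key, hneg]
  field_simp
  ring
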